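/- Let R be an F-finite reduced Noetherian ring of prime characteristic p and let c ∈ R° be an element such that the localization R_c is strongly F-regular. Then there exists an integer n ≥ 1 such that c^n is an a-test element for every ideal a of R. -/

import Mathlib

open TensorProduct

universe u v

section TightClosureBasics

variable (R : Type u) [CommRing R]

/-- `R°`: the set of elements of `R` not contained in any minimal prime ideal. -/
def Rcirc : Set R := {c | ∀ P ∈ minimalPrimes R, c ∉ P}

/-- `I^{[q]}`: the ideal generated by the `q`-th powers of elements of `I`. -/
def idealBracketPow (I : Ideal R) (q : ℕ) : Ideal R :=
  Ideal.span ((fun x => x ^ q) '' (I : Set R))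

/-- The `a`-tight closure `I^{*a}` of an ideal `I ⊆ R` (as a subset of `R`):
all `z` such that for some `c ∈ R°` one has `c z^q a^q ⊆ I^{[q]}` for all `q = p^e ≫ 0`. -/
def idealTC (p : ℕ) (a I : Ideal R) : Set R :=
  {z | ∃ c ∈ Rcirc R, ∃ e₀ : ℕ, ∀ e, e₀ ≤ e → ∀ α ∈ a ^ p ^ e,
    c * z ^ p ^ e * α ∈ idealBracketPow R I (p ^ e)}

variable (p : ℕ) [Fact p.Prime] [CharP R p]

/-- `ᵉR`: the ring `R` viewed as an `R`-algebra via the `e`-fold Frobenius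
`x ↦ x ^ p ^ e`. -/
def FrobAlg (_p _e : ℕ) : Type u := R

instance (e : ℕ) : CommRing (FrobAlg R p e) := inferInstanceAs (CommRing R)

noncomputable instance (e : ℕ) : Algebra R (FrobAlg R p e) :=
  RingHom.toAlgebra (iterateFrobenius R p e)

/-- The Frobenius functor `F^e(M) = ᵉR ⊗_R M`, an `R`-module via the left factor. -/
def FrobPow (e : ℕ) (M : Type v) [AddCommGroup M] [Module R M] : Type (max u v) :=
  TensorProduct R (FrobAlg R p e) M

variable {M : Type v} [AddCommGroup M] [Module R M]

noncomputable instance (e : ℕ) : AddCommGroup (FrobPow R p e M) :=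
  inferInstanceAs (AddCommGroup (TensorProduct R (FrobAlg R p e) M))

noncomputable instance (e : ℕ) : Module R (FrobPow R p e M) :=
  inferInstanceAs (Module (FrobAlg R p e) (TensorProduct R (FrobAlg R p e) M))

/-- The `e`-times iterated Frobenius map `M → F^e(M)`, `z ↦ z^q := 1 ⊗ z`. -/
noncomputable def frobM (e : ℕ) (z : M) : FrobPow R p e M :=
  (1 : FrobAlg R p e) ⊗ₜ[R] z

/-- `N^{[q]}_M`: the image of `F^e(N) → F^e(M)`, i.e. the `R`-span of the image of
`N` under the Frobenius map `M → F^e(M)`. -/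
noncomputable def bracketPow (e : ℕ) (N : Submodule R M) : Submodule R (FrobPow R p e M) :=
  Submodule.span R (frobM R p e '' (N : Set M))

/-- The `a`-tight closure `N^{*a}_M` of a submodule `N ⊆ M`: all `z ∈ M` such that for
some `c ∈ R°` one has `c z^q a^q ⊆ N^{[q]}_M` for all `q = p^e ≫ 0`. -/
noncomputable def modTC (a : Ideal R) (N : Submodule R M) : Set M :=
  {z | ∃ c ∈ Rcirc R, ∃ e₀ : ℕ, ∀ e, e₀ ≤ e → ∀ α ∈ a ^ p ^ e,
    (c * α) • frobM R p e z ∈ bracketPow R p e N}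

/-- The annihilator ideal of a subset of a module. -/
def setAnn (S : Set M) : Ideal R where
  carrier := {r | ∀ z ∈ S, r • z = 0}
  add_mem' := by
    intro r s hr hs z hz
    rw [add_smul, hr z hz, hs z hz, add_zero]
  zero_mem' := by
    intro z _
    rw [zero_smul]
  smul_mem' := by
    intro c r hr z hz
    rw [smul_eq_mul, mul_smul, hr z hz, smul_zero]

/-- `τ(a)`: the intersection, over all finitely generated `R`-modules `M`, of
`Ann_R (0^{*a}_M)`. -/
noncomputable def tauIdeal (a : Ideal R) : Ideal R where
  carrier := {r | ∀ (N : Type u) [AddCommGroup N] [Module R N], Module.Finite R N →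
      ∀ z ∈ modTC R p a (⊥ : Submodule R N), r • z = 0}
  add_mem' := by
    intro r s hr hs N _ _ hN z hz
    rw [add_smul, hr N hN z hz, hs N hN z hz, add_zero]
  zero_mem' := by
    intro N _ _ _ z _
    rw [zero_smul]
  smul_mem' := by
    intro c r hr N _ _ hN z hz
    rw [smul_eq_mul, mul_smul, hr N hN z hz, smul_zero]

end TightClosureBasics

section RegularExcellent

/-- A regular local ring: a Noetherian local ring whose maximal ideal can be generated
by `dim R` elements. -/
def IsRegularLocal (A : Type v) [CommRing A] : Prop :=
  ∃ h : IsLocalRing A, letI := h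
  IsNoetherianRing A ∧
    ∃ s : Finset A, Ideal.span (s : Set A) = IsLocalRing.maximalIdeal A ∧
      (s.card : WithBot ℕ∞) = ringKrullDim A

/-- A `k`-algebra `C` over a field `k` is geometrically regular if for every finite field
extension `k'` of `k` all localizations of `k' ⊗_k C` at primes are regular local rings. -/
def IsGeometricallyRegular (k : Type u) (C : Type u) [Field k] [CommRing C] [Algebra k C] :
    Prop :=
  ∀ (k' : Type u) [Field k'] [Algebra k k'], Module.Finite k k' →
    ∀ (Q : Ideal (TensorProduct k k' C)) (hQ : Q.IsPrime), letI := hQ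
      IsRegularLocal (Localization.AtPrime Q)

/-- `A` is a G-ring (Grothendieck ring): for every prime `P` of `A` the fibres of the
completion map `A_P → (A_P)^` are geometrically regular. -/
def IsGRing (A : Type u) [CommRing A] : Prop :=
  ∀ (P : Ideal A) (hP : P.IsPrime), letI := hP
    ∀ (Q : Ideal (Localization.AtPrime P)) (hQ : Q.IsPrime), letI := hQ
      IsGeometricallyRegular
        (IsLocalRing.ResidueField (Localization.AtPrime Q))
        (TensorProduct (Localization.AtPrime P)
          (IsLocalRing.ResidueField (Localization.AtPrime Q))
          (AdicCompletion (IsLocalRing.maximalIdeal (Localization.AtPrime P))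
            (Localization.AtPrime P)))

/-- A ring is catenary if any two saturated chains of primes with the same endpoints
have the same length. -/
def IsCatenary (A : Type*) [CommRing A] : Prop :=
  ∀ c d : LTSeries (PrimeSpectrum A),
    (∀ i : Fin c.length, c.toFun i.castSucc ⋖ c.toFun i.succ) →
    (∀ i : Fin d.length, d.toFun i.castSucc ⋖ d.toFun i.succ) →
    c.head = d.head → c.last = d.last → c.length = d.length

/-- `A` is J-2: the regular locus of every finitely generated `A`-algebra is open. -/
def IsJ2 (A : Type u) [CommRing A] : Prop :=
  ∀ (n : ℕ) (I : Ideal (MvPolynomial (Fin n) A)),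
    IsOpen {P : PrimeSpectrum (MvPolynomial (Fin n) A ⧸ I) |
      IsRegularLocal (Localization.AtPrime P.asIdeal)}

/-- An excellent ring: a Noetherian, universally catenary G-ring satisfying J-2. -/
def IsExcellent (A : Type u) [CommRing A] : Prop :=
  IsNoetherianRing A ∧ (∀ n : ℕ, IsCatenary (MvPolynomial (Fin n) A)) ∧
    IsGRing A ∧ IsJ2 A

/-- A ring is equidimensional if all its minimal primes have the same dimension. -/
def IsEquidimensional (A : Type*) [CommRing A] : Prop :=
  ∀ P ∈ minimalPrimes A, ringKrullDim (A ⧸ P) = ringKrullDim A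

end RegularExcellent

section Misc

variable (R : Type u) [CommRing R]

/-- `x : Fin n → A` is a system of parameters of the local ring `A`: `n = dim A` and
the `x i` generate an ideal primary to the maximal ideal. -/
def IsSOP (A : Type v) [CommRing A] [IsLocalRing A] (n : ℕ) (x : Fin n → A) : Prop :=
  (n : WithBot ℕ∞) = ringKrullDim A ∧
    (Ideal.span (Set.range x)).radical = IsLocalRing.maximalIdeal A

/-- A local ring is F-rational if every ideal generated by a system of parameters is
tightly closed. -/
def IsFRational (A : Type v) [CommRing A] [IsLocalRing A] (p : ℕ) : Prop :=
  ∀ (n : ℕ) (x : Fin n → A), IsSOP A n x →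
    idealTC A p ⊤ (Ideal.span (Set.range x)) = (Ideal.span (Set.range x) : Set A)

/-- The tight integral closure `{I_1, …, I_n}^{⎯*}` of a family of ideals. -/
def tightIntClosure (p : ℕ) {n : ℕ} (I : Fin n → Ideal R) : Set R :=
  {x | ∃ c ∈ Rcirc R, ∃ e₀ : ℕ, ∀ e, e₀ ≤ e → c * x ^ p ^ e ∈ ∑ i, (I i) ^ p ^ e}

/-- The integral closure of an ideal `J`: all elements satisfying an integral equation
`x^n + a_1 x^{n-1} + ⋯ + a_n = 0` with `a_i ∈ J^i`. -/
def integralClosureOfIdeal (J : Ideal R) : Set R :=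
  {x | ∃ n : ℕ, 0 < n ∧ ∃ a : ℕ → R, (∀ i ∈ Finset.range n, a i ∈ J ^ (i + 1)) ∧
    x ^ n + ∑ i ∈ Finset.range n, a i * x ^ (n - 1 - i) = 0}

/-- `x_1, …, x_n` are parameters: the ideal generated by the first `i` of them has
height at least `i`, for each `i`. -/
def AreParameters {n : ℕ} (x : Fin n → R) : Prop :=
  ∀ i : ℕ, i ≤ n → ∀ (P : Ideal R) (hP : P.IsPrime),
    Ideal.span (x '' {j : Fin n | (j : ℕ) < i}) ≤ P →
      (i : ℕ∞) ≤ Order.height (⟨P, hP⟩ : PrimeSpectrum R)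

/-- A regular sequence: each `x i` is a non-zerodivisor modulo its predecessors. -/
def IsRegSeq {n : ℕ} (x : Fin n → R) : Prop :=
  ∀ i : Fin n, ∀ z : R,
    x i * z ∈ Ideal.span (x '' {j : Fin n | j < i}) →
      z ∈ Ideal.span (x '' {j : Fin n | j < i})

/-- A prime ideal of height one. -/
def IsHeightOnePrime (P : Ideal R) : Prop :=
  ∃ hP : P.IsPrime, Order.height (⟨P, hP⟩ : PrimeSpectrum R) = 1

/-- The `r`-th symbolic power of a (divisorial) ideal `J` in a normal domain:
the intersection of the height-one primary components `J^r R_P ∩ R`. -/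
def symbolicPow (J : Ideal R) (r : ℕ) : Ideal R where
  carrier := {x | ∀ P : Ideal R, IsHeightOnePrime R P → ∃ s ∉ P, s * x ∈ J ^ r}
  zero_mem' := by
    intro P hP
    obtain ⟨hP', -⟩ := hP
    exact ⟨1, (Ideal.ne_top_iff_one P).mp hP'.ne_top, by simp⟩
  add_mem' := by
    intro x y hx hy P hP
    obtain ⟨s, hs, hsx⟩ := hx P hP
    obtain ⟨t, ht, hty⟩ := hy P hP
    obtain ⟨hP', -⟩ := hP
    refine ⟨s * t, fun hmem => ?_, ?_⟩
    · rcases hP'.mem_or_mem hmem with h | h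
      · exact hs h
      · exact ht h
    · have heq : s * t * (x + y) = t * (s * x) + s * (t * y) := by ring
      rw [heq]
      exact Ideal.add_mem _ (Ideal.mul_mem_left _ _ hsx) (Ideal.mul_mem_left _ _ hty)
  smul_mem' := by
    intro c x hx P hP
    obtain ⟨s, hs, hsx⟩ := hx P hP
    refine ⟨s, hs, ?_⟩
    have heq : s * (c • x) = c * (s * x) := by
      simp only [smul_eq_mul]; ring
    rw [heq]
    exact Ideal.mul_mem_left _ _ hsx

/-- Data of an injective hull `E = E_A(A/m)` of the residue field of a local ring:
an injective module together with an essential embedding of the residue field. -/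
structure InjectiveHullRF (A : Type u) [CommRing A] [IsLocalRing A] where
  E : Type u
  [acg : AddCommGroup E]
  [mod : Module A E]
  injective : Module.Injective A E
  emb : (A ⧸ IsLocalRing.maximalIdeal A) →ₗ[A] E
  emb_inj : Function.Injective emb
  essential : ∀ N : Submodule A E, N ≠ ⊥ → N ⊓ LinearMap.range emb ≠ ⊥

attribute [instance] InjectiveHullRF.acg InjectiveHullRF.mod

/-- `ω` is a canonical ideal of the local ring `A`: an ideal whose Matlis dual is the
top local cohomology module `H^d_m(A)`. -/
def IsCanonicalIdeal (A : Type u) [CommRing A] [IsLocalRing A] (ω : Ideal A) : Prop :=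
  ∃ d : ℕ, ringKrullDim A = d ∧
    ∃ hull : InjectiveHullRF A,
      Nonempty ((ω →ₗ[A] hull.E) ≃ₗ[A]
        ((localCohomology (IsLocalRing.maximalIdeal A) d).obj (ModuleCat.of A A)))

/-- A normal local ring is `ℚ`-Gorenstein if it admits a canonical module (here realized
as a canonical ideal `ω`) some symbolic power `ω^{(r)}`, `r ≥ 1`, of which is principal,
i.e. isomorphic to `A`. -/
def IsQGorenstein (A : Type u) [CommRing A] [IsLocalRing A] : Prop :=
  ∃ ω : Ideal A, ω ≠ ⊥ ∧ IsCanonicalIdeal A ω ∧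
    ∃ r : ℕ, 1 ≤ r ∧ ∃ f : A, symbolicPow A ω r = Ideal.span {f}

variable (p : ℕ) [Fact p.Prime] [CharP R p]

/-- `ᵉR` as an `R`-module via restriction of scalars along the `e`-fold Frobenius:
`r • x = r ^ (p ^ e) * x`. -/
def FrobRestrict (_p _e : ℕ) : Type u := R

instance (e : ℕ) : AddCommGroup (FrobRestrict R p e) := inferInstanceAs (AddCommGroup R)

noncomputable instance (e : ℕ) : Module R (FrobRestrict R p e) :=
  Module.compHom R (iterateFrobenius R p e)

/-- `R` is F-finite: `¹R` is a finitely generated `R`-module. -/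
def IsFFinite : Prop := Module.Finite R (FrobRestrict R p 1)

/-- A reduced ring `A` of characteristic `p` is strongly F-regular if for every
`c ∈ A°` there is `q = p^e` such that the inclusion `c^{1/q} A ⊆ A^{1/q}` splits
`A`-linearly; equivalently (identifying `A^{1/q}` with `A` via the `q`-th power map)
there is an additive map `φ : A → A` with `φ (r^q * x) = r * φ x` for all `r, x` and
`φ c = 1`. -/
def StronglyFRegular (A : Type v) [CommRing A] (p : ℕ) : Prop :=
  ∀ c ∈ Rcirc A, ∃ e : ℕ, ∃ φ : A →+ A,
    (∀ r x : A, φ (r ^ p ^ e * x) = r * φ x) ∧ φ c = 1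

/-- `c` is an `a`-test element: `c ∈ R°` and `c z^q a^q ⊆ I^{[q]}` for every ideal `I`,
every `z ∈ I^{*a}` and every `q = p^e`. -/
def IsTestElementFor (a : Ideal R) (c : R) : Prop :=
  c ∈ Rcirc R ∧
    ∀ I : Ideal R, ∀ z ∈ idealTC R p a I, ∀ e : ℕ, ∀ α ∈ a ^ p ^ e,
      c * z ^ p ^ e * α ∈ idealBracketPow R I (p ^ e)

end Misc


section AuxTestElement

variable {R : Type u} [CommRing R]

lemma aux_mem_nilradical_of_forall_minimal {x : R}
    (hx : ∀ P ∈ minimalPrimes R, x ∈ P) : x ∈ nilradical R := by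
  rw [nilradical_eq_sInf]
  refine Ideal.mem_sInf.mpr ?_
  intro J hJ
  haveI : J.IsPrime := hJ
  obtain ⟨P, hPmin, hPle⟩ := Ideal.exists_minimalPrimes_le (I := ⊥) (J := J) bot_le
  exact hPle (hx P hPmin)

lemma aux_eq_zero_of_pow_mul_eq_zero {c : R} (hred : IsReduced R) (hc : c ∈ Rcirc R)
    {k : ℕ} {x : R} (h : c ^ k * x = 0) : x = 0 := by
  have hnil : x ∈ nilradical R := by
    apply aux_mem_nilradical_of_forall_minimal
    intro P hP
    haveI : P.IsPrime := hP.1.1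
    have hmem : c ^ k * x ∈ P := h ▸ P.zero_mem
    rcases (Ideal.IsPrime.mem_or_mem ‹P.IsPrime› hmem) with h1 | h1
    · exact absurd (Ideal.IsPrime.mem_of_pow_mem ‹P.IsPrime› _ h1) (hc P hP)
    · exact h1
  exact hred.eq_zero x (mem_nilradical.mp hnil)

lemma aux_mem_nonZeroDivisors {c : R} (hred : IsReduced R) (hc : c ∈ Rcirc R) :
    c ∈ nonZeroDivisors R := by
  rw [mem_nonZeroDivisors_iff_right]
  intro x hx
  exact aux_eq_zero_of_pow_mul_eq_zero hred hc (k := 1) (by rwa [pow_one, mul_comm])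

lemma aux_algebraMap_injective {c : R} (hred : IsReduced R) (hc : c ∈ Rcirc R) :
    Function.Injective (algebraMap R (Localization.Away c)) := by
  apply IsLocalization.injective (M := Submonoid.powers c)
  rw [Submonoid.powers_le]
  exact aux_mem_nonZeroDivisors hred hc

lemma aux_isReduced_localization {c : R} (hred : IsReduced R) :
    IsReduced (Localization.Away c) := by
  constructor
  rintro y ⟨n, hn⟩
  rcases Nat.eq_zero_or_pos n with rfl | hn0
  · have h1 : (1 : Localization.Away c) = 0 := by simpa using hn
    calc y = y * 1 := (mul_one y).symm
      _ = 0 := by rw [h1, mul_zero]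
  · obtain ⟨m, a, ha⟩ := IsLocalization.Away.surj (S := Localization.Away c) c y
    have hy : algebraMap R (Localization.Away c) (a ^ n) = 0 := by
      rw [map_pow, ← ha, mul_pow, hn, zero_mul]
    obtain ⟨⟨s, j, rfl⟩, hs⟩ := (IsLocalization.map_eq_zero_iff (Submonoid.powers c)
      (Localization.Away c) _).mp hy
    have hs' : c ^ j * a ^ n = 0 := hs
    have hpow : (c ^ j * a) ^ n = 0 := by
      obtain ⟨l, rfl⟩ := Nat.exists_eq_add_of_le hn0
      calc (c ^ j * a) ^ (1 + l) = (c ^ j) ^ l * (c ^ j * a ^ (1 + l)) := by ring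
        _ = 0 := by rw [hs', mul_zero]
    have hza : c ^ j * a = 0 := hred.eq_zero _ ⟨_, hpow⟩
    have h1 : (algebraMap R (Localization.Away c)) (c ^ j) *
        (algebraMap R (Localization.Away c)) a = 0 := by
      rw [← map_mul, hza, map_zero]
    rw [map_pow] at h1
    have h2 : (algebraMap R (Localization.Away c)) a = 0 :=
      ((IsLocalization.Away.algebraMap_pow_isUnit (S := Localization.Away c) c
        j).mul_right_eq_zero).mp h1
    have h3 : y * (algebraMap R (Localization.Away c)) c ^ m = 0 := by rw [ha, h2]
    exact ((IsLocalization.Away.algebraMap_pow_isUnit (S := Localization.Away c) c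
      m).mul_left_eq_zero).mp h3


lemma aux_mem_Rcirc_localization {c : R} (d : R) (hd : d ∈ Rcirc R) :
    algebraMap R (Localization.Away c) d ∈ Rcirc (Localization.Away c) := by
  intro Q hQ hmem
  haveI hQp : Q.IsPrime := hQ.1.1
  set f := algebraMap R (Localization.Away c) with hf
  haveI hP' : (Q.comap f).IsPrime := Ideal.IsPrime.comap f
  obtain ⟨P₀, hP₀min, hP₀le⟩ := Ideal.exists_minimalPrimes_le (I := ⊥) (J := Q.comap f) bot_le
  haveI hP₀p : P₀.IsPrime := hP₀min.1.1
  have hcP₀ : c ∉ P₀ := by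
    intro hcmem
    have h1 : f c ∈ Q := Ideal.mem_comap.mp (hP₀le hcmem)
    exact hQp.ne_top (Ideal.eq_top_of_isUnit_mem _ h1
      (IsLocalization.Away.algebraMap_isUnit (S := Localization.Away c) c))
  have hdisj : Disjoint ((Submonoid.powers c : Submonoid R) : Set R) (P₀ : Set R) := by
    rw [Set.disjoint_left]
    rintro x ⟨j, rfl⟩ hxP
    exact hcP₀ (Ideal.IsPrime.mem_of_pow_mem hP₀p _ hxP)
  have hQ₀p : (P₀.map f).IsPrime :=
    IsLocalization.isPrime_of_isPrime_disjoint (Submonoid.powers c) _ P₀ hP₀p hdisj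
  have hQ₀le : P₀.map f ≤ Q := Ideal.map_le_iff_le_comap.mpr hP₀le
  have hQle : Q ≤ P₀.map f := hQ.2 ⟨hQ₀p, bot_le⟩ hQ₀le
  have hdP₀ : d ∈ P₀ := by
    have h2 : d ∈ (P₀.map f).comap f := Ideal.mem_comap.mpr (hQle hmem)
    rwa [show (P₀.map f).comap f = P₀ from
      IsLocalization.comap_map_of_isPrime_disjoint (Submonoid.powers c) _ hP₀p hdisj] at h2
  exact hd P₀ hP₀min hdP₀

lemma aux_rep (p : ℕ) [Fact p.Prime] [CharP R p] (hFF : IsFFinite R p) (E : ℕ) :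
    ∃ (ι : Type) (_ : Fintype ι) (g : ι → R), ∀ x : R, ∃ r : ι → R,
      ∑ i, (r i) ^ p ^ E * g i = x := by
  haveI hexp : ExpChar R p := ExpChar.prime (Fact.out)
  have h1 : ∃ (n : ℕ) (s : Fin n → R), ∀ x : R, ∃ r : Fin n → R,
      ∑ i, (r i) ^ p * s i = x := by
    haveI : Module.Finite R (FrobRestrict R p 1) := hFF
    obtain ⟨n, s, hs⟩ := Module.Finite.exists_fin (R := R) (M := FrobRestrict R p 1)
    refine ⟨n, fun i => show R from s i, fun x => ?_⟩
    have hx : (show FrobRestrict R p 1 from x) ∈ Submodule.span R (Set.range s) := by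
      rw [hs]; trivial
    obtain ⟨r, hr⟩ := (Submodule.mem_span_range_iff_exists_fun R).mp hx
    refine ⟨r, ?_⟩
    have hr2 : (∑ i, show R from r i • s i) = x := hr
    rw [← hr2]
    apply Finset.sum_congr rfl
    intro i _
    show r i ^ p * (show R from s i) = show R from r i • s i
    show r i ^ p * (show R from s i) = iterateFrobenius R p 1 (r i) * (show R from s i)
    rw [iterateFrobenius_def, pow_one]
  induction E with
  | zero =>
    refine ⟨PUnit, inferInstance, fun _ => 1, fun x => ⟨fun _ => x, by simp⟩⟩
  | succ E ih =>
    obtain ⟨ι, hι, g, hg⟩ := ih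
    obtain ⟨n, s, hs1⟩ := h1
    refine ⟨ι × Fin n, inferInstance, fun q => (g q.1) ^ p * s q.2, fun x => ?_⟩
    obtain ⟨ρ, hρ⟩ := hs1 x
    choose σ hσ using fun i => hg (ρ i)
    refine ⟨fun q => σ q.2 q.1, ?_⟩
    have key : ∀ i, ρ i ^ p * s i = ∑ j, (σ i j) ^ p ^ (E + 1) * ((g j) ^ p * s i) := by
      intro i
      conv_lhs => rw [← hσ i]
      rw [sum_pow_char, Finset.sum_mul]
      apply Finset.sum_congr rfl
      intro j _
      rw [mul_pow, ← pow_mul, ← pow_succ]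
      ring
    calc (∑ q : ι × Fin n, (σ q.2 q.1) ^ p ^ (E + 1) * ((g q.1) ^ p * s q.2))
        = ∑ j, ∑ i, (σ i j) ^ p ^ (E + 1) * ((g j) ^ p * s i) := by
          rw [Fintype.sum_prod_type]
      _ = ∑ i, ∑ j, (σ i j) ^ p ^ (E + 1) * ((g j) ^ p * s i) := Finset.sum_comm
      _ = ∑ i, ρ i ^ p * s i := by
          exact Finset.sum_congr rfl fun i _ => (key i).symm
      _ = x := hρ

lemma aux_descend (p : ℕ) [Fact p.Prime] [CharP R p] {c : R}
    (hred : IsReduced R) (hc : c ∈ Rcirc R) (hFF : IsFFinite R p) (E : ℕ)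
    (lam : Localization.Away c → Localization.Away c)
    (hadd : ∀ x y, lam (x + y) = lam x + lam y)
    (hsem : ∀ r x, lam (r ^ p ^ E * x) = r * lam x) :
    ∃ (K : ℕ) (ψ : R → R), (∀ x y, ψ (x + y) = ψ x + ψ y) ∧
      (∀ r x, ψ (r ^ p ^ E * x) = r * ψ x) ∧
      ∀ x, algebraMap R (Localization.Away c) (ψ x) =
        algebraMap R (Localization.Away c) c ^ K *
          lam (algebraMap R (Localization.Away c) x) := by
  classical
  set f := algebraMap R (Localization.Away c) with hf
  have hinj := aux_algebraMap_injective hred hc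
  obtain ⟨ι, hι, g, hg⟩ := aux_rep p hFF E
  have hsurj : ∀ i : ι, ∃ (k : ℕ) (t : R), lam (f (g i)) * f c ^ k = f t :=
    fun i => IsLocalization.Away.surj (S := Localization.Away c) c (lam (f (g i)))
  choose k t hkt using hsurj
  set K := Finset.univ.sup k with hK
  have hkK : ∀ i, k i ≤ K := fun i => Finset.le_sup (Finset.mem_univ i)
  have hLsum : ∀ (F : ι → Localization.Away c),
      lam (∑ i, F i) = ∑ i, lam (F i) := by
    intro F
    exact map_sum (AddMonoidHom.mk' lam hadd) F Finset.univ
  have key : ∀ x : R, ∃ y : R, f y = f c ^ K * lam (f x) := by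
    intro x
    obtain ⟨r, hr⟩ := hg x
    refine ⟨∑ i, r i * (c ^ (K - k i) * t i), ?_⟩
    conv_rhs => rw [← hr]
    have h1 : f (∑ i, r i ^ p ^ E * g i) = ∑ i, (f (r i)) ^ p ^ E * f (g i) := by
      rw [map_sum]
      exact Finset.sum_congr rfl fun i _ => by rw [map_mul, map_pow]
    rw [h1, hLsum, Finset.mul_sum, map_sum]
    apply Finset.sum_congr rfl
    intro i _
    rw [hsem]
    rw [map_mul, map_mul, map_pow]
    have h2 : f c ^ K = f c ^ (K - k i) * f c ^ k i := by
      rw [← pow_add, Nat.sub_add_cancel (hkK i)]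
    rw [h2, ← hkt i]
    ring
  choose ψ hψ using key
  refine ⟨K, ψ, ?_, ?_, hψ⟩
  · intro x y
    apply hinj
    rw [map_add, hψ, hψ, hψ, map_add, hadd, mul_add]
  · intro r x
    apply hinj
    rw [map_mul, hψ, hψ, map_mul, map_pow, hsem]
    ring


lemma aux_bracket_le (I : Ideal R) (q q' : ℕ) :
    idealBracketPow R I (q * q') ≤ idealBracketPow R (idealBracketPow R I q) q' := by
  rw [idealBracketPow, Ideal.span_le]
  rintro v ⟨x, hx, rfl⟩
  have h1 : x ^ q ∈ idealBracketPow R I q := Ideal.subset_span ⟨x, hx, rfl⟩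
  have h2 : (x ^ q) ^ q' ∈ idealBracketPow R (idealBracketPow R I q) q' :=
    Ideal.subset_span ⟨x ^ q, h1, rfl⟩
  show (fun y => y ^ (q * q')) x ∈ _
  simp only [pow_mul]
  exact h2

lemma aux_psi_maps_bracket {q : ℕ} {ψ : R → R}
    (hadd : ∀ x y, ψ (x + y) = ψ x + ψ y)
    (hsem : ∀ r x, ψ (r ^ q * x) = r * ψ x) (J : Ideal R) :
    ∀ v ∈ idealBracketPow R J q, ∀ r : R, ψ (r * v) ∈ J := by
  have h0 : ψ 0 = 0 := by
    have h := hadd 0 0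
    rw [add_zero] at h
    exact (left_eq_add.mp h)
  intro v hv
  induction hv using Submodule.span_induction with
  | mem x hx =>
      obtain ⟨y, hy, rfl⟩ := hx
      intro r
      show ψ (r * y ^ q) ∈ J
      rw [mul_comm, hsem]
      exact Ideal.mul_mem_right _ _ hy
  | zero =>
      intro r
      rw [mul_zero, h0]
      exact J.zero_mem
  | add x y hx hy ihx ihy =>
      intro r
      rw [mul_add, hadd]
      exact J.add_mem (ihx r) (ihy r)
  | smul a x hx ih =>
      intro r
      rw [smul_eq_mul, ← mul_assoc]
      exact ih (r * a)

set_option maxHeartbeats 1000000 in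
set_option synthInstance.maxHeartbeats 400000 in
lemma aux_lambda_of_all_units (p : ℕ) [Fact p.Prime] [CharP R p] [IsNoetherianRing R]
    {c : R} (hred : IsReduced R) (hc : c ∈ Rcirc R)
    (hunit : ∀ δ ∈ Rcirc (Localization.Away c), IsUnit δ) :
    ∃ lam : Localization.Away c → Localization.Away c,
      (∀ x y, lam (x + y) = lam x + lam y) ∧
      (∀ r x, lam (r ^ p ^ 1 * x) = r * lam x) ∧
      lam (algebraMap R (Localization.Away c) c) =
        algebraMap R (Localization.Away c) c := by
  classical
  set Rc := Localization.Away c with hRc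
  haveI hRcNoeth : IsNoetherianRing Rc :=
    IsLocalization.isNoetherianRing (Submonoid.powers c) Rc ‹IsNoetherianRing R›
  haveI hRcRed : IsReduced Rc := aux_isReduced_localization hred
  have hinj : Function.Injective (algebraMap R Rc) := aux_algebraMap_injective hred hc
  haveI hCharRc : CharP Rc p := charP_of_injective_algebraMap hinj p
  haveI hexpRc : ExpChar Rc p := ExpChar.prime (Fact.out)
  have hfin : (minimalPrimes Rc).Finite := minimalPrimes.finite_of_isNoetherianRing Rc
  have hmin : ∀ Q : Ideal Rc, Q.IsPrime → Q ∈ minimalPrimes Rc := by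
    intro Q hQ
    have hsub : (Q : Set Rc) ⊆ ⋃ P ∈ (↑hfin.toFinset : Set (Ideal Rc)), (P : Set Rc) := by
      intro x hx
      by_cases hxmin : ∃ P ∈ minimalPrimes Rc, x ∈ P
      · obtain ⟨P, hP, hxP⟩ := hxmin
        exact Set.mem_biUnion (Finset.mem_coe.mpr (hfin.mem_toFinset.mpr hP)) hxP
      · push_neg at hxmin
        have hu : IsUnit x := hunit x hxmin
        exact absurd (Ideal.eq_top_of_isUnit_mem _ hx hu) hQ.ne_top
    obtain ⟨P, hPs, hQP⟩ := (Ideal.subset_union_prime (⊥ : Ideal Rc) (⊥ : Ideal Rc)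
      (fun P hP _ _ => (hfin.mem_toFinset.mp hP).1.1)).mp hsub
    have hPmin : P ∈ minimalPrimes Rc := hfin.mem_toFinset.mp hPs
    have hPQ : P ≤ Q := hPmin.2 ⟨hQ, bot_le⟩ hQP
    rw [le_antisymm hQP hPQ]
    exact hPmin
  have hmax : ∀ Q : Ideal Rc, Q.IsPrime → Q.IsMaximal := by
    intro Q hQ
    obtain ⟨Mx, hMx, hQMx⟩ := Ideal.exists_le_maximal Q hQ.ne_top
    have hMxmin := hmin Mx hMx.isPrime
    have hMxQ : Mx ≤ Q := hMxmin.2 ⟨hQ, bot_le⟩ hQMx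
    rwa [le_antisymm hQMx hMxQ]
  haveI := hfin.to_subtype
  have hinf : ⨅ P : {P // P ∈ minimalPrimes Rc}, (P : Ideal Rc) = ⊥ := by
    apply le_antisymm _ bot_le
    intro x hx
    rw [Ideal.mem_bot]
    have hxall : ∀ P ∈ minimalPrimes Rc, x ∈ P := by
      intro P hP
      exact (Submodule.mem_iInf _).mp hx ⟨P, hP⟩
    exact hRcRed.eq_zero x (mem_nilradical.mp (aux_mem_nilradical_of_forall_minimal hxall))
  have hpair : Pairwise (Function.onFun IsCoprime fun P : {P // P ∈ minimalPrimes Rc} => (P : Ideal Rc)) := by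
    intro P P' hne
    refine Ideal.isCoprime_iff_sup_eq.mpr ?_
    exact Ideal.IsMaximal.coprime_of_ne (hmax _ P.2.1.1) (hmax _ P'.2.1.1)
      (fun h => hne (Subtype.ext h))
  letI : ∀ P : {P // P ∈ minimalPrimes Rc}, Field (Rc ⧸ (P : Ideal Rc)) :=
    fun P => @Ideal.Quotient.field _ _ _ (hmax _ P.2.1.1)
  let eCRT : Rc ≃+* ∀ P : {P // P ∈ minimalPrimes Rc}, Rc ⧸ (P : Ideal Rc) :=
    (RingEquiv.quotientBot Rc).symm.trans
      ((Ideal.quotEquivOfEq hinf.symm).trans (Ideal.quotientInfRingEquivPiQuotient _ hpair))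
  haveI hss : IsSemisimpleRing Rc := eCRT.symm.isSemisimpleRing
  set cbar := algebraMap R Rc c with hcbar
  have hcu : IsUnit cbar := IsLocalization.Away.algebraMap_isUnit (S := Rc) c
  have hsmulV : ∀ (r : Rc) (x : FrobRestrict Rc p 1),
      r • x = (show FrobRestrict Rc p 1 from r ^ p * (show Rc from x)) := by
    intro r x
    show iterateFrobenius Rc p 1 r * (show Rc from x) = r ^ p * (show Rc from x)
    rw [iterateFrobenius_def, pow_one]
  let μ : Rc →ₗ[Rc] FrobRestrict Rc p 1 :=
    { toFun := fun r => show FrobRestrict Rc p 1 from r ^ p * cbar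
      map_add' := by
        intro x y
        show ((x + y) ^ p * cbar : Rc) = x ^ p * cbar + y ^ p * cbar
        rw [add_pow_char, add_mul]
      map_smul' := by
        intro r x
        show (((r * x) ^ p * cbar : Rc) : FrobRestrict Rc p 1) =
          r • (show FrobRestrict Rc p 1 from x ^ p * cbar)
        rw [hsmulV]
        show ((r * x) ^ p * cbar : Rc) = r ^ p * (x ^ p * cbar)
        rw [mul_pow]
        ring }
  have hμ : ∀ r : Rc, μ r = (show FrobRestrict Rc p 1 from r ^ p * cbar) := fun _ => rfl
  have hμinj : Function.Injective μ := by
    intro x y hxy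
    have h1 : (x ^ p * cbar : Rc) = y ^ p * cbar := by
      rw [hμ, hμ] at hxy
      exact hxy
    have h2 : (x ^ p : Rc) = y ^ p := IsUnit.mul_right_cancel hcu h1
    have h3 : ((x - y) ^ p : Rc) = 0 := by
      rw [sub_pow_char, h2, sub_self]
    have h4 : (x - y : Rc) = 0 := hRcRed.eq_zero _ ⟨p, h3⟩
    exact sub_eq_zero.mp h4
  obtain ⟨W, hW⟩ := exists_isCompl (LinearMap.range μ)
  set proj := Submodule.linearProjOfIsCompl _ W hW with hproj
  set eqv := LinearEquiv.ofInjective μ hμinj with heqv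
  refine ⟨fun v => cbar * (eqv.symm (proj (show FrobRestrict Rc p 1 from v)) : Rc),
    ?_, ?_, ?_⟩
  · intro x y
    show cbar * (eqv.symm (proj ((show FrobRestrict Rc p 1 from x) +
      (show FrobRestrict Rc p 1 from y)))) = _
    rw [map_add, map_add, mul_add]
  · intro r x
    show cbar * eqv.symm (proj (show FrobRestrict Rc p 1 from r ^ p ^ 1 * x)) =
      r * (cbar * eqv.symm (proj (show FrobRestrict Rc p 1 from x)))
    have h5 : (show FrobRestrict Rc p 1 from r ^ p ^ 1 * x) =
        r • (show FrobRestrict Rc p 1 from x) := by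
      rw [hsmulV]
      show (r ^ p ^ 1 * x : Rc) = r ^ p * x
      rw [pow_one]
    rw [h5, map_smul, map_smul, smul_eq_mul]
    ring
  · show cbar * eqv.symm (proj (show FrobRestrict Rc p 1 from cbar)) = cbar
    have h1 : (show FrobRestrict Rc p 1 from cbar) = μ 1 := by
      rw [hμ]
      show cbar = ((1 : Rc) ^ p * cbar : Rc)
      rw [one_pow, one_mul]
    have h2 : proj (μ 1) = eqv 1 := by
      have h3 := Submodule.linearProjOfIsCompl_apply_left hW
        ⟨μ 1, LinearMap.mem_range_self μ 1⟩
      apply Subtype.ext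
      rw [show ((eqv 1 : LinearMap.range μ) : FrobRestrict Rc p 1) = μ 1 from
        LinearEquiv.ofInjective_apply (f := μ) (h := hμinj) 1]
      change proj _ = _ at h3
      calc (proj (μ 1) : FrobRestrict Rc p 1)
          = (proj ((⟨μ 1, LinearMap.mem_range_self μ 1⟩ : LinearMap.range μ) :
              FrobRestrict Rc p 1) : FrobRestrict Rc p 1) := rfl
        _ = μ 1 := by rw [h3]
    rw [h1, h2, LinearEquiv.symm_apply_apply]
    exact mul_one _

end AuxTestElement

/-- **Theorem 1.7(1)/Lemma 1.8.** If `R` is F-finite, reduced, Noetherian of prime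
characteristic `p`, `c ∈ R°` and `R_c` is strongly F-regular, then some power `c^n`
(`n ≥ 1`) is an `a`-test element for every ideal `a` of `R`. -/
theorem exists_pow_isTestElement_of_stronglyFRegular_localization
    (R : Type u) [CommRing R] [IsNoetherianRing R]
    (p : ℕ) [Fact p.Prime] [CharP R p]
    (hred : IsReduced R) (hFF : IsFFinite R p)
    (c : R) (hc : c ∈ Rcirc R)
    (hreg : StronglyFRegular (Localization.Away c) p) :
    ∃ n : ℕ, 1 ≤ n ∧ ∀ a : Ideal R, IsTestElementFor R p a (c ^ n) := by
  classical
  have hinj : Function.Injective (algebraMap R (Localization.Away c)) :=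
    aux_algebraMap_injective hred hc
  set f := algebraMap R (Localization.Away c) with hf
  -- Step 1: a fixed Frobenius-semilinear map θ at some level E ≥ 1 with θ c = c ^ N.
  have hθex : ∃ (E N : ℕ) (θ : R → R), 1 ≤ E ∧ 1 ≤ N ∧
      (∀ x y, θ (x + y) = θ x + θ y) ∧ (∀ r x, θ (r ^ p ^ E * x) = r * θ x) ∧
      θ c = c ^ N := by
    by_cases hcase : ∃ δ ∈ Rcirc (Localization.Away c), ¬ IsUnit δ
    · obtain ⟨δ, hδ, hδu⟩ := hcase
      obtain ⟨E, φ, hφ, hφδ⟩ := hreg δ hδ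
      have hE : 1 ≤ E := by
        rcases Nat.eq_zero_or_pos E with rfl | h
        · exfalso
          apply hδu
          have h1 := hφ δ 1
          rw [pow_zero, pow_one, mul_one] at h1
          exact IsUnit.of_mul_eq_one (φ 1) (by rw [← h1, hφδ])
        · exact h
      have hp1 : p ^ E - 1 + 1 = p ^ E := by
        have h2 : 1 ≤ p ^ E := Nat.one_le_pow _ _ (Fact.out : p.Prime).pos
        omega
      have heqq : δ * f c ^ (p ^ E - 1) * f c = f c ^ p ^ E * δ := by
        conv_rhs => rw [← hp1, pow_succ]
        ring
      obtain ⟨K, ψ, hψadd, hψsem, hψval⟩ := aux_descend p hred hc hFF E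
        (fun x => φ (δ * f c ^ (p ^ E - 1) * x))
        (fun x y => by
          show φ (δ * f c ^ (p ^ E - 1) * (x + y)) =
            φ (δ * f c ^ (p ^ E - 1) * x) + φ (δ * f c ^ (p ^ E - 1) * y)
          rw [mul_add, map_add])
        (fun r x => by
          show φ (δ * f c ^ (p ^ E - 1) * (r ^ p ^ E * x)) =
            r * φ (δ * f c ^ (p ^ E - 1) * x)
          rw [show δ * f c ^ (p ^ E - 1) * (r ^ p ^ E * x) =
            r ^ p ^ E * (δ * f c ^ (p ^ E - 1) * x) from by ring, hφ])
      refine ⟨E, K + 1, ψ, hE, by omega, hψadd, hψsem, ?_⟩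
      apply hinj
      have hval := hψval c
      rw [heqq, hφ, hφδ, mul_one] at hval
      rw [map_pow, hval, pow_succ]
    · push_neg at hcase
      obtain ⟨lam, hadd, hsem, hlamc⟩ := aux_lambda_of_all_units p hred hc hcase
      obtain ⟨K, ψ, hψadd, hψsem, hψval⟩ := aux_descend p hred hc hFF 1 lam hadd hsem
      refine ⟨1, K + 1, ψ, le_refl 1, by omega, hψadd, hψsem, ?_⟩
      apply hinj
      have hval := hψval c
      rw [hlamc] at hval
      rw [map_pow, hval, pow_succ]
  obtain ⟨E, N, θ, hE, hN, hθadd, hθsem, hθc⟩ := hθex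
  refine ⟨2 * N + 4, by omega, ?_⟩
  intro a
  constructor
  · intro P hP hmem
    exact hc P hP (Ideal.IsPrime.mem_of_pow_mem hP.1.1 _ hmem)
  intro I z hz e₂ α hα
  obtain ⟨d, hd, e₀, hwit⟩ := hz
  obtain ⟨Ed, φd, hφd, hφdd⟩ := hreg (f d) (aux_mem_Rcirc_localization d hd)
  obtain ⟨Kd, ψd, hψdadd, hψdsem, hψdval⟩ :=
    aux_descend p hred hc hFF Ed (⇑φd) (fun x y => map_add φd x y) hφd
  have hψdd : ψd d = c ^ Kd := by
    apply hinj
    have hval := hψdval d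
    rw [hφdd, mul_one] at hval
    rw [map_pow, hval]
  -- generic facts
  have hpowmem : ∀ (fℓ Eℓ : ℕ) (β : R), β ∈ a ^ p ^ fℓ → β ^ p ^ Eℓ ∈ a ^ p ^ (fℓ + Eℓ) := by
    intro fℓ Eℓ β hβ
    have h1 := Ideal.pow_mem_pow hβ (p ^ Eℓ)
    rwa [← pow_mul, ← pow_add] at h1
  have hbr : ∀ fℓ Eℓ : ℕ, idealBracketPow R I (p ^ (fℓ + Eℓ)) ≤
      idealBracketPow R (idealBracketPow R I (p ^ fℓ)) (p ^ Eℓ) := by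
    intro fℓ Eℓ
    have h1 := aux_bracket_le (R := R) I (p ^ fℓ) (p ^ Eℓ)
    rwa [← pow_add] at h1
  have hzpow : ∀ fℓ Eℓ : ℕ, z ^ p ^ (fℓ + Eℓ) = (z ^ p ^ fℓ) ^ p ^ Eℓ := by
    intro fℓ Eℓ
    rw [← pow_mul, ← pow_add]
  -- base case
  have Hbase : ∀ fℓ, e₀ ≤ fℓ → ∀ β ∈ a ^ p ^ fℓ,
      c ^ Kd * z ^ p ^ fℓ * β ∈ idealBracketPow R I (p ^ fℓ) := by
    intro fℓ hfℓ β hβ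
    have hw := hwit (fℓ + Ed) (by omega) (β ^ p ^ Ed) (hpowmem fℓ Ed β hβ)
    have hw2 : d * z ^ p ^ (fℓ + Ed) * β ^ p ^ Ed ∈
        idealBracketPow R (idealBracketPow R I (p ^ fℓ)) (p ^ Ed) := hbr fℓ Ed hw
    have hmem2 := aux_psi_maps_bracket hψdadd hψdsem (idealBracketPow R I (p ^ fℓ))
      _ hw2 1
    rw [one_mul] at hmem2
    have hval : ψd (d * z ^ p ^ (fℓ + Ed) * β ^ p ^ Ed) = c ^ Kd * (z ^ p ^ fℓ * β) := by
      rw [show d * z ^ p ^ (fℓ + Ed) * β ^ p ^ Ed = (z ^ p ^ fℓ * β) ^ p ^ Ed * d from by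
        rw [hzpow fℓ Ed, mul_pow]; ring]
      rw [hψdsem, hψdd]
      ring
    rw [hval] at hmem2
    rwa [show c ^ Kd * z ^ p ^ fℓ * β = c ^ Kd * (z ^ p ^ fℓ * β) from by ring]
  -- iteration step
  have Hstep : ∀ m g : ℕ,
      (∀ fℓ, g ≤ fℓ → ∀ β ∈ a ^ p ^ fℓ,
        c ^ m * z ^ p ^ fℓ * β ∈ idealBracketPow R I (p ^ fℓ)) →
      (∀ fℓ, g - E ≤ fℓ → ∀ β ∈ a ^ p ^ fℓ,
        c ^ (N + m / 2 + 1) * z ^ p ^ fℓ * β ∈ idealBracketPow R I (p ^ fℓ)) := by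
    intro m g hH1 fℓ hfℓ β hβ
    have hpE2 : 2 ≤ p ^ E := by
      have hp2 : 2 ≤ p := (Fact.out : p.Prime).two_le
      calc 2 ≤ p := hp2
        _ = p ^ 1 := (pow_one p).symm
        _ ≤ p ^ E := Nat.pow_le_pow_right (by omega) hE
    set T := (m / 2 + 1) * p ^ E with hT
    have hmle : m ≤ T := by
      have h2j : m ≤ (m / 2 + 1) * 2 := by omega
      calc m ≤ (m / 2 + 1) * 2 := h2j
        _ ≤ (m / 2 + 1) * p ^ E := Nat.mul_le_mul_left _ hpE2
    have h1 := hH1 (fℓ + E) (by omega) (β ^ p ^ E) (hpowmem fℓ E β hβ)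
    have h2 : c ^ m * z ^ p ^ (fℓ + E) * β ^ p ^ E ∈
        idealBracketPow R (idealBracketPow R I (p ^ fℓ)) (p ^ E) := hbr fℓ E h1
    have h3 : c ^ (T + 1 - m) * (c ^ m * z ^ p ^ (fℓ + E) * β ^ p ^ E) ∈
        idealBracketPow R (idealBracketPow R I (p ^ fℓ)) (p ^ E) :=
      Ideal.mul_mem_left _ _ h2
    have hTm : T + 1 - m + m = T + 1 := by omega
    have heq2 : c ^ (T + 1 - m) * (c ^ m * z ^ p ^ (fℓ + E) * β ^ p ^ E) =
        (c ^ (m / 2 + 1) * z ^ p ^ fℓ * β) ^ p ^ E * c := by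
      calc c ^ (T + 1 - m) * (c ^ m * z ^ p ^ (fℓ + E) * β ^ p ^ E)
          = c ^ (T + 1 - m + m) * (z ^ p ^ (fℓ + E) * β ^ p ^ E) := by
            rw [pow_add]; ring
        _ = c ^ (T + 1) * ((z ^ p ^ fℓ) ^ p ^ E * β ^ p ^ E) := by
            rw [hTm, hzpow fℓ E]
        _ = (c ^ (m / 2 + 1) * z ^ p ^ fℓ * β) ^ p ^ E * c := by
            rw [hT]; ring
    rw [heq2] at h3
    have h4 := aux_psi_maps_bracket hθadd hθsem (idealBracketPow R I (p ^ fℓ)) _ h3 1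
    rw [one_mul, hθsem, hθc] at h4
    rwa [show c ^ (N + m / 2 + 1) * z ^ p ^ fℓ * β =
      c ^ (m / 2 + 1) * z ^ p ^ fℓ * β * c ^ N from by
        rw [show N + m / 2 + 1 = (m / 2 + 1) + N from by omega, pow_add]; ring]
  -- monotonicity in the exponent
  have Hmono : ∀ m m' g : ℕ, m ≤ m' →
      (∀ fℓ, g ≤ fℓ → ∀ β ∈ a ^ p ^ fℓ,
        c ^ m * z ^ p ^ fℓ * β ∈ idealBracketPow R I (p ^ fℓ)) →
      (∀ fℓ, g ≤ fℓ → ∀ β ∈ a ^ p ^ fℓ,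
        c ^ m' * z ^ p ^ fℓ * β ∈ idealBracketPow R I (p ^ fℓ)) := by
    intro m m' g hmm' h1 fℓ hfℓ β hβ
    have h2 := h1 fℓ hfℓ β hβ
    rw [show c ^ m' * z ^ p ^ fℓ * β = c ^ (m' - m) * (c ^ m * z ^ p ^ fℓ * β) from by
      rw [← mul_assoc, ← mul_assoc, ← pow_add, show m' - m + m = m' from by omega]]
    exact Ideal.mul_mem_left _ _ h2
  -- the iteration
  set mseq : ℕ → ℕ := fun k => Nat.rec Kd (fun _ mk => N + mk / 2 + 1) k with hmseq
  have hmseqS : ∀ k, mseq (k + 1) = N + mseq k / 2 + 1 := fun k => rfl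
  have Hk : ∀ k, ∀ fℓ, e₀ - k * E ≤ fℓ → ∀ β ∈ a ^ p ^ fℓ,
      c ^ mseq k * z ^ p ^ fℓ * β ∈ idealBracketPow R I (p ^ fℓ) := by
    intro k
    induction k with
    | zero =>
        intro fℓ hfℓ β hβ
        exact Hbase fℓ (by simpa using hfℓ) β hβ
    | succ k ih =>
        have h2 := Hstep _ _ ih
        have heq : e₀ - k * E - E = e₀ - (k + 1) * E := by
          rw [Nat.sub_sub, Nat.succ_mul]
        rw [heq] at h2
        intro fℓ hfℓ β hβ
        rw [hmseqS k]
        exact h2 fℓ hfℓ β hβ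
  have hbound : ∀ k, mseq k ≤ 2 * N + 4 ∨ mseq k ≤ Kd - k := by
    intro k
    induction k with
    | zero => right; simp only [Nat.sub_zero]; exact le_refl Kd
    | succ k ih =>
        have hS := hmseqS k
        rcases ih with h | h
        · left; omega
        · by_cases h2 : mseq k ≤ 2 * N + 4
          · left; omega
          · right; omega
  -- conclusion
  have hfinal : ∀ fℓ, 0 ≤ fℓ → ∀ β ∈ a ^ p ^ fℓ,
      c ^ (2 * N + 4) * z ^ p ^ fℓ * β ∈ idealBracketPow R I (p ^ fℓ) := by
    have hk := Hk (e₀ + Kd)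
    have hg0 : e₀ - (e₀ + Kd) * E = 0 := by
      apply Nat.sub_eq_zero_of_le
      calc e₀ ≤ (e₀ + Kd) * 1 := by omega
        _ ≤ (e₀ + Kd) * E := Nat.mul_le_mul_left _ hE
    rw [hg0] at hk
    have hb := hbound (e₀ + Kd)
    have hle : mseq (e₀ + Kd) ≤ 2 * N + 4 := by omega
    exact Hmono _ _ _ hle hk
  exact hfinal e₂ (Nat.zero_le _) α hα
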